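/- Let ρ : (0,1] → ℝ be a nonnegative measurable function such that r ↦ r³ρ(r) is integrable on (0,1). Let r* ∈ (0,1], δ > 0, and k ∈ ℤ² \ {0} satisfy π ≤ δ|k| ≤ π/r*. Then δ² λ_δ(k) ≥ 4 (arccos(1/3) − π/3) ∫₀^{r*} r ρ(r) (1 − cos r) dr. -/

import Mathlib

open Real MeasureTheory

/-- Euclidean norm of a nonzero integer vector `k ∈ ℤ²`. -/
noncomputable def knorm2 (k : ℤ × ℤ) : ℝ :=
  Real.sqrt ((k.1 : ℝ) ^ 2 + (k.2 : ℝ) ^ 2)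

/-- The 2D Fourier symbol of the nonlocal diffusion operator:
`λ_δ(k) = (4/δ²) ∫₀^{π/2} ∫₀¹ r ρ(r) (1 − cos(r δ |k| cos θ)) dr dθ`. -/
noncomputable def lambdaDelta2 (ρ : ℝ → ℝ) (δ κ : ℝ) : ℝ :=
  (4 / δ ^ 2) * ∫ θ in (0:ℝ)..(π / 2), ∫ r in (0:ℝ)..1,
    r * ρ r * (1 - Real.cos (r * δ * κ * Real.cos θ))

set_option maxHeartbeats 1000000 in
theorem lambdaDelta2_bound_midrange (ρ : ℝ → ℝ) (hmeas : Measurable ρ)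
    (hnonneg : ∀ r ∈ Set.Ioc (0:ℝ) 1, 0 ≤ ρ r)
    (hint : IntervalIntegrable (fun r => r ^ 3 * ρ r) volume 0 1)
    (rs : ℝ) (hrs : rs ∈ Set.Ioc (0:ℝ) 1)
    (δ : ℝ) (hδ : 0 < δ) (k : ℤ × ℤ) (hk : k ≠ 0)
    (hlow : π ≤ δ * knorm2 k) (hhigh : δ * knorm2 k ≤ π / rs) :
    4 * (Real.arccos (1 / 3) - π / 3) *
        (∫ r in (0:ℝ)..rs, r * ρ r * (1 - Real.cos r))
      ≤ δ ^ 2 * lambdaDelta2 ρ δ (knorm2 k) := by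
  set κ := knorm2 k with hκ
  set m := δ * κ with hm
  have hπ := Real.pi_gt_three
  have hm3 : (3:ℝ) ≤ m := le_trans (by linarith) hlow
  have hmpos : (0:ℝ) < m := by linarith
  have hrs0 : 0 < rs := hrs.1
  have hrs1 : rs ≤ 1 := hrs.2
  have hmrs : m * rs ≤ π := by
    rw [le_div_iff₀ hrs0] at hhigh; linarith [hhigh]
  set a := Real.arccos (1/3) with ha
  have ha2 : a ≤ π / 2 := Real.arccos_le_pi_div_two.2 (by norm_num)
  have hcos_a : Real.cos a = 1/3 := Real.cos_arccos (by norm_num) (by norm_num)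
  have ha1 : π / 3 ≤ a := by
    have h12 : Real.arccos (1/2) = π / 3 :=
      Real.arccos_eq_of_eq_cos (by positivity) (by linarith)
        (by rw [Real.cos_pi_div_three])
    rw [ha, ← h12]
    exact (Real.strictAntiOn_arccos.le_iff_ge
      (Set.mem_Icc.2 ⟨by norm_num, by norm_num⟩)
      (Set.mem_Icc.2 ⟨by norm_num, by norm_num⟩)).2 (by norm_num)
  have hsub1 : Set.uIcc (0:ℝ) rs ⊆ Set.uIcc (0:ℝ) 1 := by
    rw [Set.uIcc_of_le hrs.1.le, Set.uIcc_of_le (by norm_num : (0:ℝ) ≤ 1)]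
    exact Set.Icc_subset_Icc le_rfl hrs.2
  have hsub2 : Set.uIcc rs (1:ℝ) ⊆ Set.uIcc (0:ℝ) 1 := by
    rw [Set.uIcc_of_le hrs.2, Set.uIcc_of_le (by norm_num : (0:ℝ) ≤ 1)]
    exact Set.Icc_subset_Icc hrs.1.le le_rfl
  -- integrability of the inner integrand for any scaling |c| ≤ m
  have key_int : ∀ c : ℝ, |c| ≤ m →
      IntervalIntegrable (fun r => r * ρ r * (1 - Real.cos (r * c))) volume 0 1 := by
    intro c hc
    apply (hint.const_mul (m ^ 2 / 2)).mono_fun'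
    · exact Measurable.aestronglyMeasurable (by fun_prop)
    · rw [Filter.EventuallyLE, ae_restrict_iff' measurableSet_uIoc]
      filter_upwards with r hr
      rw [Set.uIoc_of_le (by norm_num : (0:ℝ) ≤ 1)] at hr
      have hr0 : 0 < r := hr.1
      have hρ : 0 ≤ ρ r := hnonneg r hr
      have h1 : 1 - Real.cos (r * c) ≤ (r * c) ^ 2 / 2 := by
        have := Real.one_sub_sq_div_two_le_cos (x := r * c); linarith
      have hc2 : c ^ 2 ≤ m ^ 2 := by
        have := abs_nonneg c; nlinarith [sq_abs c]
      have hnn : 0 ≤ 1 - Real.cos (r * c) := by linarith [Real.cos_le_one (r * c)]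
      simp only [Real.norm_eq_abs]
      rw [abs_of_nonneg (by positivity)]
      calc r * ρ r * (1 - Real.cos (r * c))
          ≤ r * ρ r * ((r * c) ^ 2 / 2) :=
            mul_le_mul_of_nonneg_left h1 (mul_nonneg hr0.le hρ)
        _ = c ^ 2 / 2 * (r ^ 3 * ρ r) := by ring
        _ ≤ m ^ 2 / 2 * (r ^ 3 * ρ r) := by
            apply mul_le_mul_of_nonneg_right (by linarith) (by positivity)
  -- the inner integral as a function of θ
  set I : ℝ → ℝ := fun θ => ∫ r in (0:ℝ)..1, r * ρ r * (1 - Real.cos (r * δ * κ * Real.cos θ))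
    with hI
  have hrewrite : ∀ θ, (fun r => r * ρ r * (1 - Real.cos (r * δ * κ * Real.cos θ)))
      = fun r => r * ρ r * (1 - Real.cos (r * (δ * κ * Real.cos θ))) := by
    intro θ; funext r; ring_nf
  have hIint : ∀ θ, IntervalIntegrable
      (fun r => r * ρ r * (1 - Real.cos (r * δ * κ * Real.cos θ))) volume 0 1 := by
    intro θ
    rw [hrewrite θ]
    apply key_int
    rw [abs_mul, ← hm, abs_of_pos hmpos]
    calc m * |Real.cos θ| ≤ m * 1 := by
          exact mul_le_mul_of_nonneg_left (abs_cos_le_one θ) hmpos.le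
      _ = m := mul_one m
  -- pointwise nonnegativity of the inner integrand
  have hptnn : ∀ (θ r : ℝ), r ∈ Set.Icc (0:ℝ) 1 →
      0 ≤ r * ρ r * (1 - Real.cos (r * δ * κ * Real.cos θ)) := by
    intro θ r hr
    rcases eq_or_lt_of_le hr.1 with h | h
    · simp [← h]
    · exact mul_nonneg (mul_nonneg h.le (hnonneg r ⟨h, hr.2⟩))
        (by linarith [Real.cos_le_one (r * δ * κ * Real.cos θ)])
  have hInn : ∀ θ, 0 ≤ I θ := by
    intro θ
    simp only [hI]
    exact intervalIntegral.integral_nonneg (a := 0) (b := 1) (by norm_num)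
      (fun r hr => hptnn _ r hr)
  -- I is measurable
  have hImeas : Measurable I := by
    have hF : StronglyMeasurable fun p : ℝ × ℝ =>
        p.2 * ρ p.2 * (1 - Real.cos (p.2 * δ * κ * Real.cos p.1)) :=
      Measurable.stronglyMeasurable (by fun_prop)
    have := hF.integral_prod_right' (ν := volume.restrict (Set.Ioc (0:ℝ) 1))
    have heq : I = fun θ => ∫ r in Set.Ioc (0:ℝ) 1,
        r * ρ r * (1 - Real.cos (r * δ * κ * Real.cos θ)) := by
      funext θ
      simp only [hI]
      rw [intervalIntegral.integral_of_le (by norm_num : (0:ℝ) ≤ 1)]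
    rw [heq]
    exact this.measurable
  -- I is bounded by M
  set M : ℝ := m ^ 2 / 2 * ∫ r in (0:ℝ)..1, r ^ 3 * ρ r with hM
  have hIbd : ∀ θ, |I θ| ≤ M := by
    intro θ
    have hbd := intervalIntegral.norm_integral_le_abs_of_norm_le
      (f := fun r => r * ρ r * (1 - Real.cos (r * δ * κ * Real.cos θ)))
      (g := fun r => m ^ 2 / 2 * (r ^ 3 * ρ r)) (μ := volume) (a := 0) (b := 1)
      ?_ (hint.const_mul (m ^ 2 / 2))
    · simp only [hI]
      have hgnn : 0 ≤ ∫ x in (0:ℝ)..1, m ^ 2 / 2 * (x ^ 3 * ρ x) := by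
        apply intervalIntegral.integral_nonneg (a := 0) (b := 1) (by norm_num)
        intro r hr
        rcases eq_or_lt_of_le hr.1 with h | h
        · simp [← h]
        · have := hnonneg r ⟨h, hr.2⟩; positivity
      refine le_trans hbd ?_
      beta_reduce
      rw [hM, ← intervalIntegral.integral_const_mul]
      exact (abs_of_nonneg hgnn).le
    · rw [ae_restrict_iff' measurableSet_uIoc]
      filter_upwards with r hr
      rw [Set.uIoc_of_le (by norm_num : (0:ℝ) ≤ 1)] at hr
      have hr0 : 0 < r := hr.1
      have hρ : 0 ≤ ρ r := hnonneg r hr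
      set c := δ * κ * Real.cos θ with hc
      have harg : r * δ * κ * Real.cos θ = r * c := by rw [hc]; ring
      have h1 : 1 - Real.cos (r * c) ≤ (r * c) ^ 2 / 2 := by
        have := Real.one_sub_sq_div_two_le_cos (x := r * c); linarith
      have hc2 : c ^ 2 ≤ m ^ 2 := by
        have h3 : |c| ≤ m := by
          rw [hc, abs_mul, ← hm, abs_of_pos hmpos]
          calc m * |Real.cos θ| ≤ m * 1 :=
                mul_le_mul_of_nonneg_left (abs_cos_le_one θ) hmpos.le
            _ = m := mul_one m
        nlinarith [sq_abs c, abs_nonneg c]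
      have hnn : 0 ≤ 1 - Real.cos (r * c) := by linarith [Real.cos_le_one (r * c)]
      rw [harg, Real.norm_eq_abs, abs_of_nonneg (by positivity)]
      calc r * ρ r * (1 - Real.cos (r * c))
          ≤ r * ρ r * ((r * c) ^ 2 / 2) :=
            mul_le_mul_of_nonneg_left h1 (mul_nonneg hr0.le hρ)
        _ = c ^ 2 / 2 * (r ^ 3 * ρ r) := by ring
        _ ≤ m ^ 2 / 2 * (r ^ 3 * ρ r) :=
            mul_le_mul_of_nonneg_right (by linarith) (by positivity)
  -- I is interval integrable on any subinterval of [0, π/2]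
  have hIint2 : IntervalIntegrable I volume 0 (π / 2) := by
    rw [intervalIntegrable_iff]
    apply Integrable.mono' (g := fun _ => M)
    · apply (integrableOn_const_iff enorm_ne_top).2
      right
      exact measure_Ioc_lt_top
    · exact (hImeas.aestronglyMeasurable).restrict
    · filter_upwards with θ
      rw [Real.norm_eq_abs]
      exact hIbd θ
  have hImono : ∀ u v : ℝ, 0 ≤ u → u ≤ v → v ≤ π / 2 → IntervalIntegrable I volume u v := by
    intro u v hu huv hv
    apply hIint2.mono_set
    rw [Set.uIcc_of_le huv, Set.uIcc_of_le (by positivity)]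
    exact Set.Icc_subset_Icc hu hv
  -- the constant C
  set C : ℝ := ∫ r in (0:ℝ)..rs, r * ρ r * (1 - Real.cos r) with hC
  -- the integrand with c = 1 is integrable
  have hint1 : IntervalIntegrable (fun r => r * ρ r * (1 - Real.cos r)) volume 0 1 := by
    have := key_int 1 (by rw [abs_one]; linarith)
    simpa using this
  -- key pointwise bound: C ≤ I θ for θ ∈ [π/3, a]
  have hkey : ∀ θ ∈ Set.Icc (π / 3) a, C ≤ I θ := by
    intro θ hθ
    have hθ0 : 0 ≤ θ := le_trans (by positivity) hθ.1
    have hcosθub : Real.cos θ ≤ 1 := Real.cos_le_one θ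
    have hcosθlb : 1/3 ≤ Real.cos θ := by
      rw [← hcos_a]
      exact Real.cos_le_cos_of_nonneg_of_le_pi hθ0 (by linarith [Real.arccos_le_pi (1/3:ℝ)]) hθ.2
    -- split I θ
    have hsplit := intervalIntegral.integral_add_adjacent_intervals
      ((hIint θ).mono_set hsub1) ((hIint θ).mono_set hsub2)
    have htail : 0 ≤ ∫ r in rs..(1:ℝ), r * ρ r * (1 - Real.cos (r * δ * κ * Real.cos θ)) := by
      apply intervalIntegral.integral_nonneg hrs1
      intro r hr
      exact hptnn _ r ⟨le_trans hrs0.le hr.1, hr.2⟩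
    have hhead : C ≤ ∫ r in (0:ℝ)..rs, r * ρ r * (1 - Real.cos (r * δ * κ * Real.cos θ)) := by
      rw [hC]
      apply intervalIntegral.integral_mono_on hrs0.le
      · exact hint1.mono_set hsub1
      · exact (hIint θ).mono_set hsub1
      · intro r hr
        rcases eq_or_lt_of_le hr.1 with h | hr0
        · simp [← h]
        have hρ : 0 ≤ ρ r := hnonneg r ⟨hr0, le_trans hr.2 hrs1⟩
        have hcc : Real.cos (r * δ * κ * Real.cos θ) ≤ Real.cos r := by
          have harg : r * δ * κ * Real.cos θ = r * (m * Real.cos θ) := by rw [hm]; ring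
          rw [harg]
          apply Real.cos_le_cos_of_nonneg_of_le_pi hr0.le
          · calc r * (m * Real.cos θ) ≤ rs * (m * 1) := by
                  apply mul_le_mul hr.2 (mul_le_mul_of_nonneg_left hcosθub hmpos.le)
                    (by positivity) hrs0.le
              _ = m * rs := by ring
              _ ≤ π := hmrs
          · have h1 : (1:ℝ) ≤ m * Real.cos θ := by nlinarith
            nlinarith
        have h1c : 1 - Real.cos r ≤ 1 - Real.cos (r * δ * κ * Real.cos θ) := by linarith
        exact mul_le_mul_of_nonneg_left h1c (mul_nonneg hr0.le hρ)
    linarith [hsplit]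
  -- bound the middle θ-integral
  have hmid : (a - π / 3) * C ≤ ∫ θ in (π / 3)..a, I θ := by
    have := intervalIntegral.integral_mono_on (f := fun _ => C) (g := I)
      (a := π / 3) (b := a) (μ := volume) ha1
      (intervalIntegrable_const) (hImono _ _ (by positivity) ha1 ha2) hkey
    rwa [intervalIntegral.integral_const, smul_eq_mul] at this
  -- assemble
  have hsplit1 := intervalIntegral.integral_add_adjacent_intervals
    (hImono 0 (π/3) le_rfl (by positivity) (by linarith))
    (hImono (π/3) a (by positivity) ha1 ha2)
  have hsplit2 := intervalIntegral.integral_add_adjacent_intervals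
    (hImono 0 a le_rfl (le_trans (by positivity) ha1) ha2)
    (hImono a (π/2) (le_trans (by positivity) ha1) ha2 le_rfl)
  have hleft : 0 ≤ ∫ θ in (0:ℝ)..(π/3), I θ :=
    intervalIntegral.integral_nonneg (by positivity) (fun u _ => hInn u)
  have hright : 0 ≤ ∫ θ in a..(π/2), I θ :=
    intervalIntegral.integral_nonneg ha2 (fun u _ => hInn u)
  have hT : (a - π / 3) * C ≤ ∫ θ in (0:ℝ)..(π/2), I θ := by
    rw [← hsplit2, ← hsplit1]
    linarith
  have hfinal : δ ^ 2 * lambdaDelta2 ρ δ κ = 4 * ∫ θ in (0:ℝ)..(π/2), I θ := by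
    rw [lambdaDelta2, hI]
    field_simp
    congr 1; funext θ; congr 1; funext r; ring_nf
  rw [hfinal]
  calc 4 * (a - π / 3) * C ≤ 4 * ((a - π / 3) * C) := by ring_nf; exact le_rfl
    _ ≤ 4 * ∫ θ in (0:ℝ)..(π/2), I θ := by linarith
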